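/- arXiv:1105.2671 — 2 statements merged into one kernel-verified Lean document; each statement's English description precedes it below -/
import Mathlib

section
/- Let q be a prime power, n ≥ m ≥ j ≥ 0 and r with max{0, r+m-n} ≤ j ≤ r ≤ n. Fix an m-dimensional subspace P₀ of F_q^n and a j-dimensional subspace Q₀ ⊆ P₀. Then the number of r-dimensional subspaces Q of F_q^n with Q ∩ P₀ = Q₀ equals q^{(r-j)(m-j)} · [n-m choose r-j]_q. -/
open Module

/-- The Gaussian binomial coefficient `[a choose b]_q` as a rational number. -/
noncomputable def gbin (q : ℚ) (a b : ℕ) : ℚ :=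
  if a < b then 0
  else (∏ t ∈ Finset.Icc (a - b + 1) a, (q ^ t - 1)) / ∏ t ∈ Finset.Icc 1 b, (q ^ t - 1)

private lemma prod_factor (q : ℚ) (b k : ℕ) (hk : k ≤ b) :
    ∏ i ∈ Finset.range k, (q ^ b - q ^ i)
      = (∏ i ∈ Finset.range k, q ^ i) * ∏ t ∈ Finset.Icc (b - k + 1) b, (q ^ t - 1) := by
  have h1 : ∀ i ∈ Finset.range k, q ^ b - q ^ i = q ^ i * (q ^ (b - i) - 1) := by
    intro i hi
    have hib : i ≤ b := le_trans (Finset.mem_range.mp hi).le hk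
    rw [mul_sub, mul_one, ← pow_add]
    congr 2
    omega
  rw [Finset.prod_congr rfl h1, Finset.prod_mul_distrib]
  congr 1
  refine Finset.prod_nbij' (fun i => b - i) (fun t => b - t) ?_ ?_ ?_ ?_ ?_
  · intro i hi; simp only [Finset.mem_range] at hi; simp only [Finset.mem_Icc]; omega
  · intro t ht; simp only [Finset.mem_Icc] at ht; simp only [Finset.mem_range]; omega
  · intro i hi; simp only [Finset.mem_range] at hi; omega
  · intro t ht; simp only [Finset.mem_Icc] at ht; omega
  · intro i hi; rfl

private lemma gbin_mul (q : ℕ) (hq : 2 ≤ q) (a k : ℕ) (hk : k ≤ a) :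
    gbin q a k * ∏ i ∈ Finset.range k, ((q : ℚ) ^ k - (q : ℚ) ^ i)
      = ∏ i ∈ Finset.range k, ((q : ℚ) ^ a - (q : ℚ) ^ i) := by
  have hq1 : (1 : ℚ) < q := by exact_mod_cast hq.trans_lt' one_lt_two
  have hden : (∏ t ∈ Finset.Icc 1 k, ((q : ℚ) ^ t - 1)) ≠ 0 := by
    refine Finset.prod_ne_zero_iff.mpr ?_
    intro t ht
    have ht1 : 1 ≤ t := (Finset.mem_Icc.mp ht).1
    have : (1 : ℚ) < (q : ℚ) ^ t := one_lt_pow₀ hq1 (by omega)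
    exact sub_ne_zero.mpr (ne_of_gt this)
  rw [gbin, if_neg (not_lt.mpr hk), prod_factor _ _ _ hk, prod_factor _ _ _ le_rfl]
  have hkk : k - k + 1 = 1 := by omega
  rw [hkk]
  field_simp

section counting

variable {F V : Type*} [Field F] [Fintype F] [AddCommGroup V] [Module F V]
  [FiniteDimensional F V]

private lemma count_tuples (U : Submodule F V) (k : ℕ)
    (hk : k ≤ finrank F V - finrank F U) :
    Nat.card {s : Fin k → V // LinearIndependent F (U.mkQ ∘ s)} =
      (Fintype.card F) ^ (finrank F U * k) *
        ∏ i : Fin k, ((Fintype.card F) ^ (finrank F V - finrank F U) - (Fintype.card F) ^ (i : ℕ)) := by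
  have hfinV : Finite V := Module.finite_of_finite F
  obtain ⟨σ, hσ⟩ := U.mkQ.exists_rightInverse_of_surjective (Submodule.range_mkQ U)
  have hσ' : ∀ x : V ⧸ U, U.mkQ (σ x) = x := fun x => DFunLike.congr_fun hσ x
  have hmem : ∀ v : V, v - σ (U.mkQ v) ∈ U := by
    intro v
    have : U.mkQ (v - σ (U.mkQ v)) = 0 := by rw [map_sub, hσ', sub_self]
    rwa [← LinearMap.mem_ker, Submodule.ker_mkQ] at this
  let e : {s : Fin k → V // LinearIndependent F (U.mkQ ∘ s)} ≃
      {t : Fin k → V ⧸ U // LinearIndependent F t} × (Fin k → U) :=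
    { toFun := fun s => (⟨U.mkQ ∘ s.1, s.2⟩, fun i => ⟨s.1 i - σ (U.mkQ (s.1 i)), hmem _⟩)
      invFun := fun p => ⟨fun i => σ (p.1.1 i) + (p.2 i : V), by
        have hcomp : U.mkQ ∘ (fun i => σ (p.1.1 i) + (p.2 i : V)) = p.1.1 := by
          funext i
          have : U.mkQ (p.2 i : V) = 0 := by
            rw [← LinearMap.mem_ker, Submodule.ker_mkQ]; exact (p.2 i).2
          simp [map_add, hσ', this]
        rw [hcomp]; exact p.1.2⟩
      left_inv := fun s => by
        apply Subtype.ext; funext i; simp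
      right_inv := fun p => by
        refine Prod.ext (Subtype.ext ?_) (funext fun i => Subtype.ext ?_)
        · funext i
          have : U.mkQ (p.2 i : V) = 0 := by
            rw [← LinearMap.mem_ker, Submodule.ker_mkQ]; exact (p.2 i).2
          simp [map_add, hσ', this]
        · have : U.mkQ (p.2 i : V) = 0 := by
            rw [← LinearMap.mem_ker, Submodule.ker_mkQ]; exact (p.2 i).2
          simp [map_add, hσ', this] }
  have hfinQ : Finite (V ⧸ U) := Quotient.finite _
  rw [Nat.card_congr e, Nat.card_prod, Nat.card_pi]
  have hq : finrank F (V ⧸ U) = finrank F V - finrank F U := by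
    have := Submodule.finrank_quotient_add_finrank U
    omega
  have h1 : Nat.card {t : Fin k → V ⧸ U // LinearIndependent F t} =
      ∏ i : Fin k, ((Fintype.card F) ^ (finrank F V - finrank F U) - (Fintype.card F) ^ (i : ℕ)) := by
    rw [card_linearIndependent (K := F) (by rw [hq]; exact hk), hq]
  have h2 : ∀ i : Fin k, Nat.card U = (Fintype.card F) ^ (finrank F U) := by
    intro i
    have : Fintype U := Fintype.ofFinite U
    rw [Nat.card_eq_fintype_card, card_eq_pow_finrank (K := F)]
  rw [h1, Finset.prod_congr rfl (fun i _ => h2 i), Finset.prod_const, Finset.card_univ,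
    Fintype.card_fin, ← pow_mul, mul_comm]

private lemma count_subspaces (U : Submodule F V) (k : ℕ)
    (hk : k ≤ finrank F V - finrank F U) :
    Nat.card {W : Submodule F V // finrank F W = k ∧ W ⊓ U = ⊥} *
        ∏ i : Fin k, ((Fintype.card F) ^ k - (Fintype.card F) ^ (i : ℕ)) =
      (Fintype.card F) ^ (finrank F U * k) *
        ∏ i : Fin k, ((Fintype.card F) ^ (finrank F V - finrank F U) - (Fintype.card F) ^ (i : ℕ)) := by
  classical
  have hfinV : Finite V := Module.finite_of_finite F
  have hfinSub : Finite (Submodule F V) :=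
    Finite.of_injective (fun W => (W : Set V)) SetLike.coe_injective
  rw [← count_tuples U k hk]
  set S := {s : Fin k → V // LinearIndependent F (U.mkQ ∘ s)} with hS
  set T := {W : Submodule F V // finrank F W = k ∧ W ⊓ U = ⊥} with hT
  have hφdim : ∀ s : S, finrank F (Submodule.span F (Set.range s.1)) = k := by
    intro s
    have hLI : LinearIndependent F s.1 := s.2.of_comp U.mkQ
    rw [finrank_span_eq_card hLI, Fintype.card_fin]
  have hφinf : ∀ s : S, Submodule.span F (Set.range s.1) ⊓ U = ⊥ := by
    intro s
    rw [Submodule.eq_bot_iff]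
    rintro x ⟨hxs, hxU⟩
    obtain ⟨c, hc⟩ := (Finsupp.mem_span_range_iff_exists_finsupp).mp hxs
    have h0 : U.mkQ x = 0 := by
      rw [← LinearMap.mem_ker, Submodule.ker_mkQ]; exact hxU
    have h1 : (c.sum fun i a => a • (U.mkQ ∘ s.1) i) = 0 := by
      have h2 := congrArg U.mkQ hc
      rw [map_finsuppSum, h0] at h2
      simpa using h2
    have hc0 : c = 0 := linearIndependent_iff.mp s.2 c
      (by rwa [Finsupp.linearCombination_apply])
    rw [← hc, hc0, Finsupp.sum_zero_index]
  let φ : S → T := fun s => ⟨Submodule.span F (Set.range s.1), hφdim s, hφinf s⟩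
  have fiber_card : ∀ W : T, Nat.card {s : S // φ s = W} =
      ∏ i : Fin k, ((Fintype.card F) ^ k - (Fintype.card F) ^ (i : ℕ)) := by
    intro W
    obtain ⟨W, hWk, hWU⟩ := W
    have hker : LinearMap.ker (U.mkQ.comp W.subtype) = ⊥ := by
      rw [LinearMap.ker_comp, Submodule.ker_mkQ, Submodule.eq_bot_iff]
      intro x hx
      have hx' : (x : V) ∈ W ⊓ U := ⟨x.2, hx⟩
      rw [hWU] at hx'
      exact Subtype.ext hx'
    have hmemW : ∀ (s : {s : S // φ s = ⟨W, hWk, hWU⟩}) (i : Fin k), s.1.1 i ∈ W :=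
      fun s i => le_of_eq (congrArg Subtype.val s.2)
        (Submodule.subset_span (Set.mem_range_self i))
    have e2 : {s : S // φ s = ⟨W, hWk, hWU⟩} ≃ {t : Fin k → W // LinearIndependent F t} := by
      refine
        { toFun := fun s => ⟨fun i => ⟨s.1.1 i, hmemW s i⟩, ?_⟩
          invFun := fun t => ⟨⟨fun i => (t.1 i : V), ?_⟩, ?_⟩
          left_inv := fun s => ?_
          right_inv := fun t => ?_ }
      · apply LinearIndependent.of_comp W.subtype
        exact s.1.2.of_comp U.mkQ
      · have : (U.mkQ.comp W.subtype) ∘ t.1 = U.mkQ ∘ (fun i => (t.1 i : V)) := rfl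
        rw [← this]
        exact t.2.map' _ hker
      · apply Subtype.ext
        show Submodule.span F (Set.range fun i => (t.1 i : V)) = W
        have : (Set.range fun i => (t.1 i : V)) = W.subtype '' (Set.range t.1) := by
          rw [← Set.range_comp]; rfl
        have htop : Submodule.span F (Set.range t.1) = ⊤ :=
          t.2.span_eq_top_of_card_eq_finrank' (by rw [Fintype.card_fin, hWk])
        rw [this, Submodule.span_image, htop, Submodule.map_subtype_top]
      · apply Subtype.ext; apply Subtype.ext; funext i; rfl
      · apply Subtype.ext; funext i; apply Subtype.ext; rfl
    rw [Nat.card_congr e2]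
    have : FiniteDimensional F W := inferInstance
    rw [card_linearIndependent (K := F) (by rw [hWk])]
    rw [hWk]
  have := Nat.card_congr (Equiv.sigmaFiberEquiv φ).symm
  rw [this]
  have hfinS : Finite S := Subtype.finite
  have : Fintype T := Fintype.ofFinite T
  have : ∀ W : T, Fintype {s : S // φ s = W} := fun W => Fintype.ofFinite _
  have hsig : Nat.card ((y : T) × {x : S // φ x = y}) = ∑ y : T, Nat.card {x : S // φ x = y} := by
    simp only [Nat.card_eq_fintype_card]
    exact Fintype.card_sigma
  rw [hsig, Finset.sum_congr rfl (fun W _ => fiber_card W), Finset.sum_const, Finset.card_univ,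
    smul_eq_mul]
  rw [Nat.card_eq_fintype_card]

private lemma finrank_map_mkQ' (B A : Submodule F V) (h : B ≤ A) :
    finrank F (A.map B.mkQ) + finrank F B = finrank F A := by
  have h1 := LinearMap.finrank_range_add_finrank_ker (B.mkQ.comp A.subtype)
  rw [LinearMap.range_comp, Submodule.range_subtype, LinearMap.ker_comp,
    Submodule.ker_mkQ] at h1
  rwa [(Submodule.comapSubtypeEquivOfLe h).finrank_eq] at h1

end counting

theorem stmt_1 (q n m j r : ℕ) (p e : ℕ) (hp : p.Prime) (hq : q = p ^ e) (he : 1 ≤ e)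
    (F : Type*) [Field F] [Fintype F] (hF : Fintype.card F = q)
    (V : Type*) [AddCommGroup V] [Module F V] [FiniteDimensional F V]
    (hV : finrank F V = n)
    (hmn : m ≤ n) (hjm : j ≤ m) (hjr : j ≤ r) (hrn : r ≤ n)
    (hmax : (r : ℤ) + m - n ≤ j)
    (P₀ Q₀ : Submodule F V) (hP₀ : finrank F P₀ = m) (hQ₀ : finrank F Q₀ = j)
    (hQP : Q₀ ≤ P₀) :
    (Nat.card {Q : Submodule F V // finrank F Q = r ∧ Q ⊓ P₀ = Q₀} : ℚ)
      = q ^ ((r - j) * (m - j)) * gbin q (n - m) (r - j) := by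
  have hq2 : 2 ≤ q := by
    rw [hq]
    calc 2 ≤ p := hp.two_le
    _ ≤ p ^ e := Nat.le_self_pow (by omega) p
  set U : Submodule F (V ⧸ Q₀) := P₀.map Q₀.mkQ with hU
  have hsurj : Function.Surjective Q₀.mkQ := Submodule.mkQ_surjective Q₀
  have hcomapU : U.comap Q₀.mkQ = P₀ := by
    rw [hU, Submodule.comap_map_mkQ, sup_eq_right.mpr hQP]
  let eqv : {Q : Submodule F V // finrank F Q = r ∧ Q ⊓ P₀ = Q₀} ≃
      {W : Submodule F (V ⧸ Q₀) // finrank F W = r - j ∧ W ⊓ U = ⊥} :=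
  { toFun := fun Q => ⟨Q.1.map Q₀.mkQ, by
      have hle : Q₀ ≤ Q.1 := le_of_eq_of_le Q.2.2.symm inf_le_left
      have := finrank_map_mkQ' Q₀ Q.1 hle
      rw [hQ₀, Q.2.1] at this
      omega, by
      have hle : Q₀ ≤ Q.1 := le_of_eq_of_le Q.2.2.symm inf_le_left
      have h1 : (Q.1.map Q₀.mkQ ⊓ U).comap Q₀.mkQ = Q₀ := by
        rw [Submodule.comap_inf, hcomapU, Submodule.comap_map_mkQ, sup_eq_right.mpr hle, Q.2.2]
      have h2 := congrArg (Submodule.map Q₀.mkQ) h1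
      have hbot : Q₀.map Q₀.mkQ = ⊥ :=
        le_bot_iff.mp (Submodule.map_le_iff_le_comap.mpr
          (by rw [Submodule.comap_bot, Submodule.ker_mkQ]))
      rwa [Submodule.map_comap_eq_of_surjective hsurj, hbot] at h2⟩
    invFun := fun W => ⟨W.1.comap Q₀.mkQ, by
      have hle : Q₀ ≤ W.1.comap Q₀.mkQ := Q₀.le_comap_mkQ _
      have h2 := finrank_map_mkQ' Q₀ (W.1.comap Q₀.mkQ) hle
      rw [Submodule.map_comap_eq_of_surjective hsurj, W.2.1, hQ₀] at h2
      omega, by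
      rw [← hcomapU, ← Submodule.comap_inf, W.2.2, Submodule.comap_bot, Submodule.ker_mkQ]⟩
    left_inv := fun Q => by
      apply Subtype.ext
      show (Q.1.map Q₀.mkQ).comap Q₀.mkQ = Q.1
      have hle : Q₀ ≤ Q.1 := le_of_eq_of_le Q.2.2.symm inf_le_left
      rw [Submodule.comap_map_mkQ, sup_eq_right.mpr hle]
    right_inv := fun W => by
      apply Subtype.ext
      exact Submodule.map_comap_eq_of_surjective hsurj _ }
  rw [Nat.card_congr eqv]
  have hdimVq : finrank F (V ⧸ Q₀) = n - j := by
    have := Submodule.finrank_quotient_add_finrank Q₀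
    rw [hQ₀, hV] at this
    omega
  have hdimU : finrank F U = m - j := by
    have := finrank_map_mkQ' Q₀ P₀ hQP
    rw [hP₀, hQ₀, ← hU] at this
    omega
  have hk : r - j ≤ finrank F (V ⧸ Q₀) - finrank F U := by
    rw [hdimVq, hdimU]
    omega
  have hcount := count_subspaces U (r - j) hk
  rw [hF, hdimU, hdimVq, show (n - j) - (m - j) = n - m by omega] at hcount
  set k := r - j with hkdef
  set d := m - j with hddef
  set a := n - m with hadef
  have hka : k ≤ a := by omega
  -- cast products to ℚ
  have hprodcast : ∀ b : ℕ, k ≤ b → ((∏ i : Fin k, (q ^ b - q ^ (i : ℕ)) : ℕ) : ℚ)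
      = ∏ i ∈ Finset.range k, ((q : ℚ) ^ b - (q : ℚ) ^ i) := by
    intro b hb
    rw [Fin.prod_univ_eq_prod_range (fun i => q ^ b - q ^ i) k, Nat.cast_prod]
    refine Finset.prod_congr rfl ?_
    intro i hi
    have hle : q ^ i ≤ q ^ b :=
      Nat.pow_le_pow_right (by omega) (le_trans (Finset.mem_range.mp hi).le hb)
    rw [Nat.cast_sub hle]
    push_cast
    ring
  have hcast : (Nat.card {W : Submodule F (V ⧸ Q₀) // finrank F W = k ∧ W ⊓ U = ⊥} : ℚ) *
        ∏ i ∈ Finset.range k, ((q : ℚ) ^ k - (q : ℚ) ^ i)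
      = (q : ℚ) ^ (d * k) * ∏ i ∈ Finset.range k, ((q : ℚ) ^ a - (q : ℚ) ^ i) := by
    have := congrArg (Nat.cast : ℕ → ℚ) hcount
    rw [Nat.cast_mul, Nat.cast_mul, Nat.cast_pow, hprodcast k le_rfl, hprodcast a hka] at this
    exact_mod_cast this
  have hPk_ne : (∏ i ∈ Finset.range k, ((q : ℚ) ^ k - (q : ℚ) ^ i)) ≠ 0 := by
    refine Finset.prod_ne_zero_iff.mpr fun i hi => sub_ne_zero.mpr (ne_of_gt ?_)
    have hq1 : (1 : ℚ) < q := by exact_mod_cast hq2.trans_lt' one_lt_two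
    exact pow_lt_pow_right₀ hq1 (Finset.mem_range.mp hi)
  have hg := gbin_mul q hq2 a k hka
  refine mul_right_cancel₀ hPk_ne ?_
  rw [hcast, ← hg]
  ring
end

section
/- Define the binary matrix M_q(i; d, k, n) with rows indexed by d-dimensional subspaces A of F_q^n and columns indexed by k-dimensional subspaces B, where M(A,B)=1 iff dim(A∩B)=i. Suppose ⌊(d+1)/2⌋ ≤ i ≤ d < k, k − i ≥ 2, n − k − s(k+d−2i) ≥ d − i, and 1 ≤ s ≤ q(q^{k-1}−1)/(q^{k-i}−1). Then for any s+1 distinct k-dimensional subspaces B₀, B₁, ..., B_s of F_q^n, the number of d-dimensional subspaces D with dim(D ∩ B₀) = i and dim(D ∩ B_j) ≠ i for all j = 1,...,s is at least q^{(d-i)(k+s(k+d−2i)−i)}·[n−k−s(k+d−2i) choose d−i]_q · (q^{k-i}[k-1 choose i-1]_q − (s−1)q^{k-i-1}[k-2 choose i-1]_q). -/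
open Module

open Submodule Finset

noncomputable def qnli (q : ℚ) (c m : ℕ) : ℚ := ∏ t ∈ Finset.range m, (q ^ c - q ^ t)

variable {q : ℚ}

lemma icc_pos (hq : 2 ≤ q) {a b : ℕ} (ha : 1 ≤ a) : 0 < ∏ t ∈ Finset.Icc a b, (q ^ t - 1) := by
  apply Finset.prod_pos
  intro t ht
  have ht1 : 1 ≤ t := le_trans ha (Finset.mem_Icc.mp ht).1
  have : (2:ℚ) ≤ q ^ t := le_trans hq (le_self_pow₀ (by linarith) (by omega))
  linarith

lemma qnli_nonneg (hq : 2 ≤ q) {c m : ℕ} (hmc : m ≤ c) : 0 ≤ qnli q c m := by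
  apply Finset.prod_nonneg
  intro t ht
  have : q ^ t ≤ q ^ c := pow_le_pow_right₀ (by linarith) (by have := Finset.mem_range.mp ht; omega)
  linarith

lemma qnli_pos (hq : 2 ≤ q) {c m : ℕ} (hmc : m ≤ c) : 0 < qnli q c m := by
  apply Finset.prod_pos
  intro t ht
  have : q ^ t < q ^ c := pow_lt_pow_right₀ (by linarith) (by have := Finset.mem_range.mp ht; omega)
  linarith

lemma qnli_eq (hq : 2 ≤ q) {c m : ℕ} (hmc : m ≤ c) :
    qnli q c m = (∏ t ∈ Finset.range m, q ^ t) * ∏ t ∈ Finset.Icc (c - m + 1) c, (q ^ t - 1) := by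
  induction m with
  | zero => simp [qnli]
  | succ m ih =>
    have hm : m ≤ c := by omega
    have h2 : Finset.Icc (c - (m+1) + 1) c = insert (c - m) (Finset.Icc (c - m + 1) c) := by
      ext x
      simp only [Finset.mem_Icc, Finset.mem_insert]
      omega
    rw [qnli, Finset.prod_range_succ, ← qnli, ih hm, h2, Finset.prod_insert (by simp),
      Finset.prod_range_succ]
    have : q ^ c - q ^ m = q ^ m * (q ^ (c - m) - 1) := by
      rw [mul_sub, mul_one, ← pow_add]
      congr 2
      omega
    rw [this]
    ring

/-- key ratio identity -/
lemma gbin_mul_qnli (hq : 2 ≤ q) {c m : ℕ} (hmc : m ≤ c) :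
    gbin q c m * qnli q m m = qnli q c m := by
  rw [gbin, if_neg (by omega), qnli_eq hq hmc, qnli_eq hq le_rfl]
  have h0 : m - m + 1 = 1 := by omega
  rw [h0]
  have hd : (∏ t ∈ Finset.Icc 1 m, (q ^ t - 1)) ≠ 0 := ne_of_gt (icc_pos hq le_rfl)
  field_simp

lemma gbin_nonneg (hq : 2 ≤ q) (c m : ℕ) : 0 ≤ gbin q c m := by
  rcases lt_or_ge c m with h | h
  · rw [gbin, if_pos h]
  · have h1 := gbin_mul_qnli hq h
    have h2 := qnli_pos hq (le_refl m)
    nlinarith [qnli_nonneg hq h]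

/-- Pascal identity -/
lemma gbin_pascal (hq : 2 ≤ q) {a b : ℕ} (hba : b + 1 ≤ a) :
    gbin q (a+1) (b+1) = gbin q a (b+1) + q ^ (a - b) * gbin q a b := by
  have hIcc1 : Finset.Icc (a + 1 - (b+1) + 1) (a+1) = insert (a+1) (Finset.Icc (a - b + 1) a) := by
    ext x
    simp only [Finset.mem_Icc, Finset.mem_insert]
    omega
  have hIcc2 : Finset.Icc (a - (b+1) + 1) a = insert (a - b) (Finset.Icc (a - b + 1) a) := by
    ext x
    simp only [Finset.mem_Icc, Finset.mem_insert]
    omega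
  have hIcc3 : Finset.Icc 1 (b+1) = insert (b+1) (Finset.Icc 1 b) := by
    ext x
    simp only [Finset.mem_Icc, Finset.mem_insert]
    omega
  rw [gbin, gbin, gbin, if_neg (by omega), if_neg (by omega), if_neg (by omega),
    hIcc1, hIcc2, hIcc3, Finset.prod_insert (by simp), Finset.prod_insert (by simp),
    Finset.prod_insert (by simp [Finset.mem_Icc])]
  have hD : (∏ t ∈ Finset.Icc 1 b, (q ^ t - 1)) ≠ 0 := ne_of_gt (icc_pos hq le_rfl)
  have hb1 : (q ^ (b+1) - 1) ≠ 0 := by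
    have : (2:ℚ) ≤ q ^ (b+1) := le_trans hq (le_self_pow₀ (by linarith) (by omega))
    linarith
  have hkey : q ^ (a - b) * q ^ (b+1) = q ^ (a+1) := by
    rw [← pow_add]
    congr 1
    omega
  field_simp
  linear_combination (-(∏ x ∈ Finset.Icc (a-b+1) a, (q^x - 1))) * hkey

example : True := trivial

lemma two_mul_gbin_le (hq : 2 ≤ q) {c i : ℕ} (hi : 1 ≤ i) (hic : i ≤ c) :
    2 * gbin q c i ≤ gbin q (c+1) i := by
  have key : 2 * qnli q c i ≤ qnli q (c+1) i := by
    have h1 : q ^ i * qnli q c i ≤ qnli q (c+1) i := by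
      have : q ^ i * qnli q c i = ∏ t ∈ Finset.range i, (q * (q ^ c - q ^ t)) := by
        rw [Finset.prod_mul_distrib, Finset.prod_const, Finset.card_range, qnli]
      rw [this, qnli]
      apply Finset.prod_le_prod
      · intro t ht
        have ht' : q ^ t ≤ q ^ c := pow_le_pow_right₀ (by linarith)
          (by have := Finset.mem_range.mp ht; omega)
        nlinarith
      · intro t ht
        have h2 : q * q ^ t ≥ q ^ t := by nlinarith [pow_nonneg (by linarith : (0:ℚ) ≤ q) t]
        have h3 : q * q ^ c = q ^ (c+1) := by rw [← pow_succ']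
        nlinarith
    have h2 : 2 * qnli q c i ≤ q ^ i * qnli q c i := by
      have h3 : (2:ℚ) ≤ q ^ i := le_trans hq (le_self_pow₀ (by linarith) (by omega))
      nlinarith [qnli_nonneg hq hic]
    linarith
  have e1 := gbin_mul_qnli hq hic
  have e2 := gbin_mul_qnli hq (le_trans hic (Nat.le_succ c))
  have hpos := qnli_pos hq (le_refl i)
  nlinarith



section Counting
variable {F V : Type*} [Field F] [Fintype F] [AddCommGroup V] [Module F V] [FiniteDimensional F V]

/-- tuples with span exactly I ≃ independent tuples in I -/
noncomputable def spanFiberEquiv (i : ℕ) (I : Submodule F V) (hI : finrank F I = i) :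
    {s : Fin i → V // LinearIndependent F s ∧ span F (Set.range s) = I}
      ≃ {s : Fin i → ↥I // LinearIndependent F s} where
  toFun s := ⟨fun t => ⟨s.1 t, by
      have : s.1 t ∈ span F (Set.range s.1) := subset_span (Set.mem_range_self t)
      rwa [s.2.2] at this⟩, by
    apply LinearIndependent.of_comp I.subtype
    exact s.2.1⟩
  invFun s := ⟨fun t => (s.1 t : V), by
    constructor
    · exact s.2.map' I.subtype (ker_subtype I)
    · apply Submodule.eq_of_le_of_finrank_le
      · rw [span_le]
        rintro x ⟨t, rfl⟩
        exact (s.1 t).2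
      · have hli : LinearIndependent F fun t => ((s.1 t : V)) := s.2.map' I.subtype (ker_subtype I)
        rw [finrank_span_eq_card hli, Fintype.card_fin, hI]⟩
  left_inv s := by ext t; rfl
  right_inv s := by ext t; rfl

lemma card_spanFiber (i : ℕ) (I : Submodule F V) (hI : finrank F I = i) :
    Nat.card {s : Fin i → V // LinearIndependent F s ∧ span F (Set.range s) = I}
      = ∏ t : Fin i, (Fintype.card F ^ i - Fintype.card F ^ (t : ℕ)) := by
  haveI : Finite V := Module.finite_of_finite F
  rw [Nat.card_congr (spanFiberEquiv i I hI), card_linearIndependent (by rw [hI])]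
  rw [hI]

/-- fibration of independent tuples over their spans -/
lemma card_subspaces_mul (i : ℕ) (P : Submodule F V → Prop) :
    Nat.card {s : Fin i → V // LinearIndependent F s ∧ P (span F (Set.range s))}
      = Nat.card {I : Submodule F V // finrank F I = i ∧ P I}
          * ∏ t : Fin i, (Fintype.card F ^ i - Fintype.card F ^ (t : ℕ)) := by
  haveI : Finite V := Module.finite_of_finite F
  classical
  set α := {s : Fin i → V // LinearIndependent F s ∧ P (span F (Set.range s))}
  set β := {I : Submodule F V // finrank F I = i ∧ P I}
  haveI : Finite (Submodule F V) :=
    Finite.of_injective (fun p : Submodule F V => (p : Set V))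
      (fun a b h => SetLike.coe_injective h)
  haveI : Fintype β := Fintype.ofFinite β
  haveI : Fintype α := Fintype.ofFinite α
  let f : α → β := fun s => ⟨span F (Set.range s.1), by
    rw [finrank_span_eq_card s.2.1, Fintype.card_fin], s.2.2⟩
  have key : ∀ b : β, Nat.card {a : α // f a = b}
      = ∏ t : Fin i, (Fintype.card F ^ i - Fintype.card F ^ (t : ℕ)) := by
    intro b
    rw [← card_spanFiber i b.1 b.2.1]
    apply Nat.card_congr
    exact {
      toFun := fun a => ⟨a.1.1, a.1.2.1, by
        have := congrArg Subtype.val a.2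
        exact this⟩
      invFun := fun s => ⟨⟨s.1, s.2.1, by rw [s.2.2]; exact b.2.2⟩, by
        apply Subtype.ext
        exact s.2.2⟩
      left_inv := fun a => by ext; rfl
      right_inv := fun s => by ext; rfl }
  have := Nat.card_congr (Equiv.sigmaFiberEquiv f).symm
  rw [this]
  rw [Nat.card_eq_fintype_card, Fintype.card_sigma]
  have : ∀ b : β, Fintype.card {a : α // f a = b}
      = ∏ t : Fin i, (Fintype.card F ^ i - Fintype.card F ^ (t : ℕ)) := by
    intro b
    rw [← Nat.card_eq_fintype_card]
    exact key b
  rw [Finset.sum_congr rfl (fun b _ => this b), Finset.sum_const, ← Nat.card_eq_fintype_card]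
  simp [mul_comm]
end Counting

section Counting2
variable {F V : Type*} [Field F] [Fintype F] [AddCommGroup V] [Module F V] [FiniteDimensional F V]

/-- count of i-dim subspaces contained in U -/
lemma card_subspaces_le_mul {i : ℕ} (U : Submodule F V) (hiU : i ≤ finrank F U) :
    Nat.card {I : Submodule F V // finrank F I = i ∧ I ≤ U}
        * ∏ t : Fin i, (Fintype.card F ^ i - Fintype.card F ^ (t : ℕ))
      = ∏ t : Fin i, (Fintype.card F ^ (finrank F U) - Fintype.card F ^ (t : ℕ)) := by
  haveI : Finite V := Module.finite_of_finite F
  rw [← card_subspaces_mul i (fun I => I ≤ U)]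
  have e : {s : Fin i → V // LinearIndependent F s ∧ span F (Set.range s) ≤ U}
      ≃ {s : Fin i → ↥U // LinearIndependent F s} := {
    toFun := fun s => ⟨fun t => ⟨s.1 t, s.2.2 (subset_span (Set.mem_range_self t))⟩,
      LinearIndependent.of_comp U.subtype s.2.1⟩
    invFun := fun s => ⟨fun t => (s.1 t : V), s.2.map' U.subtype (ker_subtype U), by
      rw [span_le]
      rintro x ⟨t, rfl⟩
      exact (s.1 t).2⟩
    left_inv := fun s => by ext; rfl
    right_inv := fun s => by ext; rfl }
  rw [Nat.card_congr e, card_linearIndependent hiU]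

lemma li_comp_mkQ_iff {m : ℕ} (W : Submodule F V) (s : Fin m → V) :
    (LinearIndependent F fun t => W.mkQ (s t))
      ↔ LinearIndependent F s ∧ span F (Set.range s) ⊓ W = ⊥ := by
  constructor
  · intro h
    refine ⟨h.of_comp W.mkQ, ?_⟩
    rw [eq_bot_iff]
    rintro x ⟨hx1, hx2⟩
    rw [SetLike.mem_coe, mem_span_range_iff_exists_fun] at hx1
    obtain ⟨c, rfl⟩ := hx1
    rw [Fintype.linearIndependent_iff] at h
    have h0 : W.mkQ (∑ t, c t • s t) = 0 := (Submodule.Quotient.mk_eq_zero W).mpr hx2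
    rw [map_sum] at h0
    simp only [map_smul] at h0
    have := h c h0
    simp only [mem_bot]
    rw [Finset.sum_eq_zero]
    intro t _
    rw [this t, zero_smul]
  · rintro ⟨h1, h2⟩
    rw [Fintype.linearIndependent_iff]
    intro c hc
    have hx : (∑ t, c t • s t) ∈ W := by
      rw [← Submodule.Quotient.mk_eq_zero W]
      rw [← W.mkQ_apply, map_sum]
      simpa only [map_smul] using hc
    have hx2 : (∑ t, c t • s t) ∈ span F (Set.range s) := by
      apply sum_mem
      intro t _
      exact smul_mem _ _ (subset_span (Set.mem_range_self t))
    have : (∑ t, c t • s t) = 0 := by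
      have := h2 ▸ (mem_inf.mpr ⟨hx2, hx⟩)
      simpa using this
    rw [Fintype.linearIndependent_iff] at h1
    exact h1 c this

/-- count of m-dim subspaces intersecting W trivially -/
lemma card_complements_mul {m : ℕ} (W : Submodule F V)
    (hm : m ≤ finrank F V - finrank F W) :
    Nat.card {D : Submodule F V // finrank F D = m ∧ D ⊓ W = ⊥}
        * ∏ t : Fin m, (Fintype.card F ^ m - Fintype.card F ^ (t : ℕ))
      = Fintype.card F ^ (finrank F W * m)
          * ∏ t : Fin m, (Fintype.card F ^ (finrank F V - finrank F W)
              - Fintype.card F ^ (t : ℕ)) := by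
  haveI : Finite V := Module.finite_of_finite F
  rw [← card_subspaces_mul m (fun D => D ⊓ W = ⊥)]
  obtain ⟨σ, hσ⟩ := W.mkQ.exists_rightInverse_of_surjective
    (LinearMap.range_eq_top.2 (mkQ_surjective W))
  have hσ' : ∀ x, W.mkQ (σ x) = x := fun x => by
    have := congrArg (fun f => f x) (congrArg DFunLike.coe hσ)
    simpa using this
  have e : {s : Fin m → V // LinearIndependent F s ∧ span F (Set.range s) ⊓ W = ⊥}
      ≃ {t : Fin m → (V ⧸ W) // LinearIndependent F t} × (Fin m → ↥W) := {
    toFun := fun s => (⟨fun t => W.mkQ (s.1 t), (li_comp_mkQ_iff W s.1).mpr s.2⟩,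
      fun t => ⟨s.1 t - σ (W.mkQ (s.1 t)), by
        rw [← Submodule.Quotient.mk_eq_zero W, ← W.mkQ_apply, map_sub, hσ', sub_self]⟩)
    invFun := fun su => ⟨fun t => σ (su.1.1 t) + (su.2 t : V), by
      rw [← li_comp_mkQ_iff W]
      have : (fun t => W.mkQ (σ (su.1.1 t) + (su.2 t : V))) = su.1.1 := by
        funext t
        rw [map_add, hσ']
        have : W.mkQ (su.2 t : V) = 0 := (Submodule.Quotient.mk_eq_zero W).mpr (su.2 t).2
        rw [this, add_zero]
      rw [this]
      exact su.1.2⟩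
    left_inv := fun s => by
      ext t
      simp
    right_inv := fun su => by
      ext t
      · simp only [map_add, hσ']
        have : W.mkQ (su.2 t : V) = 0 := (Submodule.Quotient.mk_eq_zero W).mpr (su.2 t).2
        rw [this, add_zero]
      · simp only [map_add, hσ']
        have h0 : W.mkQ (su.2 t : V) = 0 := (Submodule.Quotient.mk_eq_zero W).mpr (su.2 t).2
        rw [h0, map_zero]
        abel
  }
  haveI : Finite (V ⧸ W) := Quotient.finite _
  rw [Nat.card_congr e, Nat.card_prod]
  have hq : finrank F (V ⧸ W) = finrank F V - finrank F W := by
    have := Submodule.finrank_quotient_add_finrank W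
    omega
  rw [card_linearIndependent (by rw [hq]; exact hm), hq]
  have : Nat.card (Fin m → ↥W) = Fintype.card F ^ (finrank F W * m) := by
    haveI : Fintype ↥W := Fintype.ofFinite _
    rw [Nat.card_eq_fintype_card, Fintype.card_fun, card_eq_pow_finrank (K := F) (V := ↥W),
      Fintype.card_fin, ← pow_mul]
  rw [this]
  ring
end Counting2

section Counting3
variable {F V : Type*} [Field F] [Fintype F] [AddCommGroup V] [Module F V] [FiniteDimensional F V]

lemma finrank_map_mkQ_add (I D : Submodule F V) (hID : I ≤ D) :
    finrank F (D.map I.mkQ) + finrank F I = finrank F D := by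
  have h1 := LinearMap.finrank_range_add_finrank_ker (I.mkQ ∘ₗ D.subtype)
  have h2 : LinearMap.range (I.mkQ ∘ₗ D.subtype) = D.map I.mkQ := by
    rw [LinearMap.range_comp, range_subtype]
  have h3 : LinearMap.ker (I.mkQ ∘ₗ D.subtype) = comap D.subtype I := by
    rw [LinearMap.ker_comp, ker_mkQ]
  have h4 : finrank F (comap D.subtype I) = finrank F I :=
    (Submodule.comapSubtypeEquivOfLe hID).finrank_eq
  rw [h2, h3, h4] at h1
  exact h1

lemma comap_mkQ_injective (I : Submodule F V) :
    Function.Injective (fun D' : Submodule F (V ⧸ I) => D'.comap I.mkQ) := by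
  intro a b h
  simpa [Submodule.map_comap_eq_of_surjective (mkQ_surjective I)]
    using congrArg (fun X : Submodule F V => X.map I.mkQ) h

lemma inf_map_mkQ_eq_bot_iff (I W D : Submodule F V) (hIW : I ≤ W) (hID : I ≤ D) :
    (D.map I.mkQ) ⊓ (W.map I.mkQ) = ⊥ ↔ D ⊓ W = I := by
  have hcomap : ((D.map I.mkQ) ⊓ (W.map I.mkQ)).comap I.mkQ = D ⊓ W := by
    rw [Submodule.comap_inf, Submodule.comap_map_mkQ, Submodule.comap_map_mkQ,
      sup_eq_right.mpr hID, sup_eq_right.mpr hIW]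
  have hbot : (⊥ : Submodule F (V ⧸ I)).comap I.mkQ = I := by
    rw [Submodule.comap_bot, Submodule.ker_mkQ]
  constructor
  · intro h
    rw [← hcomap, h, hbot]
  · intro h
    apply comap_mkQ_injective I
    simp only
    rw [hcomap, hbot, h]

/-- extensions of I of dim i+m avoiding W ≃ complements in the quotient -/
noncomputable def extEquiv (I W : Submodule F V) (hIW : I ≤ W) (m : ℕ) :
    {D : Submodule F V // finrank F D = finrank F I + m ∧ I ≤ D ∧ D ⊓ W = I}
      ≃ {D' : Submodule F (V ⧸ I) // finrank F D' = m ∧ D' ⊓ (W.map I.mkQ) = ⊥} where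
  toFun D := ⟨D.1.map I.mkQ, by
    have h1 := finrank_map_mkQ_add I D.1 D.2.2.1
    refine ⟨by have := D.2.1; omega, ?_⟩
    rw [inf_map_mkQ_eq_bot_iff I W D.1 hIW D.2.2.1]
    exact D.2.2.2⟩
  invFun D' := ⟨D'.1.comap I.mkQ, by
    have hID : I ≤ D'.1.comap I.mkQ := by
      intro x hx
      simp only [Submodule.mem_comap]
      rw [show I.mkQ x = 0 from (Submodule.Quotient.mk_eq_zero I).mpr hx]
      exact Submodule.zero_mem _
    have hmap : (D'.1.comap I.mkQ).map I.mkQ = D'.1 :=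
      Submodule.map_comap_eq_of_surjective (mkQ_surjective I) _
    have h1 := finrank_map_mkQ_add I (D'.1.comap I.mkQ) hID
    rw [hmap] at h1
    refine ⟨by have := D'.2.1; omega, hID, ?_⟩
    rw [← inf_map_mkQ_eq_bot_iff I W _ hIW hID, hmap]
    exact D'.2.2⟩
  left_inv D := by
    apply Subtype.ext
    simp only
    rw [Submodule.comap_map_mkQ, sup_eq_right.mpr D.2.2.1]
  right_inv D' := by
    apply Subtype.ext
    simp only
    exact Submodule.map_comap_eq_of_surjective (mkQ_surjective I) _
end Counting3

section Counting4
variable {F V : Type*} [Field F] [Fintype F] [AddCommGroup V] [Module F V] [FiniteDimensional F V]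

lemma card_extensions_mul (I W : Submodule F V) (hIW : I ≤ W) (m : ℕ)
    (hm : m ≤ finrank F V - finrank F W) :
    Nat.card {D : Submodule F V // finrank F D = finrank F I + m ∧ I ≤ D ∧ D ⊓ W = I}
        * ∏ t : Fin m, (Fintype.card F ^ m - Fintype.card F ^ (t : ℕ))
      = Fintype.card F ^ ((finrank F W - finrank F I) * m)
          * ∏ t : Fin m, (Fintype.card F ^ (finrank F V - finrank F W)
              - Fintype.card F ^ (t : ℕ)) := by
  rw [Nat.card_congr (extEquiv I W hIW m)]
  have hWq : finrank F (W.map I.mkQ) = finrank F W - finrank F I := by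
    have := finrank_map_mkQ_add I W hIW
    omega
  have hVq : finrank F (V ⧸ I) = finrank F V - finrank F I := by
    have := Submodule.finrank_quotient_add_finrank I
    omega
  have hIW' : finrank F I ≤ finrank F W := Submodule.finrank_mono hIW
  have hWV : finrank F W ≤ finrank F V := Submodule.finrank_le W
  have := card_complements_mul (F := F) (V := V ⧸ I) (W.map I.mkQ) (m := m)
    (by rw [hWq, hVq]; omega)
  rw [hWq, hVq] at this
  rw [show finrank F V - finrank F I - (finrank F W - finrank F I)
    = finrank F V - finrank F W by omega] at this
  exact this

lemma exists_intermediate_submodule (c : ℕ) :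
    ∀ (p P : Submodule F V) (r : ℕ), p ≤ P → r = finrank F p + c → r ≤ finrank F P →
      ∃ W : Submodule F V, p ≤ W ∧ W ≤ P ∧ finrank F W = r := by
  induction c with
  | zero => exact fun p P r hpP hr _ => ⟨p, le_refl p, hpP, by omega⟩
  | succ c ih =>
    intro p P r hpP hr hrP
    have hlt : p < P := lt_of_le_of_ne hpP (by
      rintro rfl
      omega)
    obtain ⟨x, hxP, hxp⟩ := SetLike.exists_of_lt hlt
    have hx0 : x ≠ 0 := fun h => hxp (h ▸ p.zero_mem)
    have hspan : finrank F (span F {x} : Submodule F V) = 1 := finrank_span_singleton hx0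
    have hinf : p ⊓ span F {x} = ⊥ := by
      rw [eq_bot_iff]
      rintro y ⟨hy1, hy2⟩
      rw [SetLike.mem_coe, Submodule.mem_span_singleton] at hy2
      obtain ⟨a, rfl⟩ := hy2
      rcases eq_or_ne a 0 with rfl | ha
      · simp
      · exact absurd (by simpa [ha] using p.smul_mem a⁻¹ hy1) hxp
    have hsup : finrank F (p ⊔ span F {x} : Submodule F V) = finrank F p + 1 := by
      have := Submodule.finrank_sup_add_finrank_inf_eq p (span F {x})
      rw [hinf, hspan] at this
      simpa using this
    have hsle : p ⊔ span F {x} ≤ P := by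
      refine sup_le hpP ?_
      rw [span_le, Set.singleton_subset_iff]
      exact hxP
    obtain ⟨W, hW1, hW2, hW3⟩ := ih (p ⊔ span F {x}) P r hsle (by omega) hrP
    exact ⟨W, le_trans le_sup_left hW1, hW2, hW3⟩

lemma finrank_sup_finset_le {ι : Type*} [DecidableEq ι] (t : Finset ι) (P0 : Submodule F V)
    (U L : ι → Submodule F V) (c : ℕ) :
    (∀ j ∈ t, L j ≤ P0) → (∀ j ∈ t, L j ≤ U j) →
    (∀ j ∈ t, finrank F (U j) ≤ finrank F (L j) + c) →
    finrank F ↥(P0 ⊔ t.sup U) ≤ finrank F P0 + t.card * c := by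
  induction t using Finset.induction_on with
  | empty => intro _ _ _; rw [Finset.sup_empty, sup_bot_eq]; simp
  | @insert a t ha ih =>
    intro hL hLU hU
    have hstep : P0 ⊔ (insert a t).sup U = (P0 ⊔ t.sup U) ⊔ U a := by
      rw [Finset.sup_insert]
      rw [sup_comm (U a) (t.sup U), ← sup_assoc]
    rw [hstep]
    have h1 := Submodule.finrank_sup_add_finrank_inf_eq (P0 ⊔ t.sup U) (U a)
    have h2 : finrank F (L a) ≤ finrank F ↥((P0 ⊔ t.sup U) ⊓ U a) := by
      apply Submodule.finrank_mono
      exact le_inf (le_trans (hL a (Finset.mem_insert_self a t)) le_sup_left)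
        (hLU a (Finset.mem_insert_self a t))
    have h3 := ih (fun j hj => hL j (Finset.mem_insert_of_mem hj))
      (fun j hj => hLU j (Finset.mem_insert_of_mem hj))
      (fun j hj => hU j (Finset.mem_insert_of_mem hj))
    have h4 := hU a (Finset.mem_insert_self a t)
    rw [Finset.card_insert_of_notMem ha, add_mul, one_mul]
    omega

end Counting4

section NcardUnions
lemma ncard_biUnion_le' {α ι : Type*} [Finite α] (t : Finset ι) (A : ι → Set α) :
    (⋃ j ∈ t, A j).ncard ≤ ∑ j ∈ t, (A j).ncard := by
  classical
  induction t using Finset.induction_on with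
  | empty => simp
  | @insert a t ha ih =>
    rw [Finset.set_biUnion_insert, Finset.sum_insert ha]
    exact le_trans (Set.ncard_union_le _ _) (by omega)

lemma ncard_biUnion_eq' {α ι : Type*} [Finite α] (t : Finset ι) (A : ι → Set α)
    (h : ∀ j ∈ t, ∀ j' ∈ t, j ≠ j' → Disjoint (A j) (A j')) :
    (⋃ j ∈ t, A j).ncard = ∑ j ∈ t, (A j).ncard := by
  classical
  induction t using Finset.induction_on with
  | empty => simp
  | @insert a t ha ih =>
    rw [Finset.set_biUnion_insert, Finset.sum_insert ha,
      Set.ncard_union_eq ?disj (Set.toFinite _) (Set.toFinite _),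
      ih (fun j hj j' hj' hne => h j (Finset.mem_insert_of_mem hj) j'
        (Finset.mem_insert_of_mem hj') hne)]
    case disj =>
      rw [Set.disjoint_iUnion_right]
      intro j
      rw [Set.disjoint_iUnion_right]
      intro hj
      exact h a (Finset.mem_insert_self a t) j (Finset.mem_insert_of_mem hj)
        (by rintro rfl; exact ha hj)
end NcardUnions

lemma cast_nli {q : ℕ} (hq : 2 ≤ q) {c mm : ℕ} (h : mm ≤ c) :
    ((∏ t : Fin mm, (q ^ c - q ^ (t : ℕ)) : ℕ) : ℚ) = qnli (q : ℚ) c mm := by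
  rw [Fin.prod_univ_eq_prod_range (fun t => q ^ c - q ^ t) mm, qnli, Nat.cast_prod]
  apply Finset.prod_congr rfl
  intro t ht
  have hle : q ^ t ≤ q ^ c := Nat.pow_le_pow_right (by omega)
    (by have := Finset.mem_range.mp ht; omega)
  push_cast [Nat.cast_sub hle]
  ring

section CastCounts
variable {F V : Type*} [Field F] [Fintype F] [AddCommGroup V] [Module F V] [FiniteDimensional F V]

lemma card_subspaces_eq_gbin (hq : 2 ≤ Fintype.card F) {i c : ℕ} (U : Submodule F V)
    (hU : finrank F U = c) (hic : i ≤ c) :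
    ((Nat.card {I : Submodule F V // finrank F I = i ∧ I ≤ U} : ℕ) : ℚ)
      = gbin (Fintype.card F : ℚ) c i := by
  have h := card_subspaces_le_mul (F := F) U (i := i) (by omega)
  rw [hU] at h
  have hcast := congrArg (fun x : ℕ => (x : ℚ)) h
  simp only [Nat.cast_mul] at hcast
  rw [cast_nli hq (le_refl i), cast_nli hq hic] at hcast
  have hpos : qnli ((Fintype.card F : ℕ) : ℚ) i i ≠ 0 :=
    ne_of_gt (qnli_pos (by exact_mod_cast hq) (le_refl i))
  have hg := gbin_mul_qnli (q := ((Fintype.card F : ℕ) : ℚ)) (by exact_mod_cast hq) hic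
  exact mul_right_cancel₀ hpos (hcast.trans hg.symm)

lemma card_extensions_eq_gbin (hq : 2 ≤ Fintype.card F) {i K mm : ℕ}
    (I W : Submodule F V) (hIW : I ≤ W) (hI : finrank F I = i) (hW : finrank F W = K)
    (hm : mm ≤ finrank F V - K) :
    ((Nat.card {D : Submodule F V // finrank F D = i + mm ∧ I ≤ D ∧ D ⊓ W = I} : ℕ) : ℚ)
      = ((Fintype.card F : ℕ) : ℚ) ^ ((K - i) * mm)
          * gbin ((Fintype.card F : ℕ) : ℚ) (finrank F V - K) mm := by
  have h := card_extensions_mul (F := F) I W hIW mm (by omega)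
  rw [hI, hW] at h
  have hcast := congrArg (fun x : ℕ => (x : ℚ)) h
  simp only [Nat.cast_mul, Nat.cast_pow] at hcast
  rw [cast_nli hq (le_refl mm), cast_nli hq hm] at hcast
  have hpos : qnli ((Fintype.card F : ℕ) : ℚ) mm mm ≠ 0 :=
    ne_of_gt (qnli_pos (by exact_mod_cast hq) (le_refl mm))
  have hg := gbin_mul_qnli (q := ((Fintype.card F : ℕ) : ℚ)) (by exact_mod_cast hq) hm
  apply mul_right_cancel₀ hpos
  rw [hcast, ← hg]
  ring
end CastCounts

set_option maxHeartbeats 1000000 in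
theorem stmt_11 (q n k d i s : ℕ) (p e : ℕ) (hp : p.Prime) (hq : q = p ^ e) (he : 1 ≤ e)
    (hi1 : (d + 1) / 2 ≤ i) (hid : i ≤ d) (hdk : d < k) (hki : 2 ≤ k - i)
    (hn : d - i ≤ n - k - s * (k + d - 2 * i)) (hkn : k + s * (k + d - 2 * i) ≤ n)
    (hs1 : 1 ≤ s) (hs2 : (s : ℚ) ≤ (q : ℚ) * ((q : ℚ) ^ (k - 1) - 1) / ((q : ℚ) ^ (k - i) - 1))
    (F : Type*) [Field F] [Fintype F] (hF : Fintype.card F = q)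
    (V : Type*) [AddCommGroup V] [Module F V] [FiniteDimensional F V]
    (hV : finrank F V = n)
    (B : Fin (s + 1) → Submodule F V) (hBinj : Function.Injective B)
    (hBk : ∀ j, finrank F (B j) = k) :
    (Nat.card {D : Submodule F V // finrank F D = d ∧ finrank F ↥(D ⊓ B 0) = i ∧
        ∀ j : Fin (s + 1), j ≠ 0 → finrank F ↥(D ⊓ B j) ≠ i} : ℚ)
      ≥ (q : ℚ) ^ ((d - i) * (k + s * (k + d - 2 * i) - i))
          * gbin q (n - k - s * (k + d - 2 * i)) (d - i)
          * ((q : ℚ) ^ (k - i) * gbin q (k - 1) (i - 1)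
              - (s - 1 : ℚ) * (q : ℚ) ^ (k - i - 1) * gbin q (k - 2) (i - 1)) := by
  classical
  haveI : Finite V := Module.finite_of_finite F
  haveI : Finite (Submodule F V) :=
    Finite.of_injective (fun P : Submodule F V => (P : Set V))
      (fun a b h => SetLike.coe_injective h)
  have hq2 : 2 ≤ q := by
    have h1 : 2 ≤ p := hp.two_le
    have h2 : p ≤ p ^ e := Nat.le_self_pow (by omega) p
    omega
  have hqQ : (2 : ℚ) ≤ (q : ℚ) := by exact_mod_cast hq2
  have hk2 : i + 2 ≤ k := by omega
  have hk1 : 1 ≤ k := by omega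
  -- i ≥ 1
  have hi0 : 1 ≤ i := by
    by_contra hcon
    have hi : i = 0 := by omega
    subst hi
    simp only [Nat.sub_zero] at hs2
    have hpow : ((q : ℚ)) ^ k = q * q ^ (k - 1) := by
      rw [← pow_succ']
      congr 1
      omega
    have hden : (0 : ℚ) < (q : ℚ) ^ k - 1 := by
      have : (2 : ℚ) ≤ (q : ℚ) ^ k := le_trans hqQ (le_self_pow₀ (by linarith) (by omega))
      linarith
    have hlt : (q : ℚ) * ((q : ℚ) ^ (k - 1) - 1) / ((q : ℚ) ^ k - 1) < 1 := by
      rw [div_lt_one hden]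
      nlinarith
    have hs1Q : (1 : ℚ) ≤ (s : ℚ) := by exact_mod_cast hs1
    linarith
  set m := d - i with hm_def
  set K := k + s * (k + d - 2 * i) with hK_def
  have hnKeq : n - k - s * (k + d - 2 * i) = n - K := by omega
  rw [hnKeq]
  have hmnK : m ≤ n - K := by omega
  have hiK : i ≤ K := by omega
  have hd_eq : d = i + m := by omega
  -- the target set
  set T : Set (Submodule F V) := {D | finrank F D = d ∧ finrank F ↥(D ⊓ B 0) = i ∧
      ∀ j : Fin (s + 1), j ≠ 0 → finrank F ↥(D ⊓ B j) ≠ i} with hT_def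
  have hTcard : (Nat.card {D : Submodule F V // finrank F D = d ∧ finrank F ↥(D ⊓ B 0) = i ∧
      ∀ j : Fin (s + 1), j ≠ 0 → finrank F ↥(D ⊓ B j) ≠ i}) = T.ncard :=
    Nat.card_coe_set_eq T
  rw [hTcard]
  -- good set
  set good : Set (Submodule F V) :=
    {I | finrank F I = i ∧ I ≤ B 0 ∧ ∀ j : Fin (s + 1), j ≠ 0 → ¬ I ≤ B j} with hgood_def
  -- dim of intersections with B 0
  have hCj : ∀ j : Fin (s + 1), j ≠ 0 → finrank F ↥(B 0 ⊓ B j) + 1 ≤ k := by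
    intro j hj
    have hle : B 0 ⊓ B j ≤ B 0 := inf_le_left
    have hne : B 0 ⊓ B j ≠ B 0 := by
      intro hEq
      have h1 : B 0 ≤ B j := by
        rw [← hEq]
        exact inf_le_right
      have h2 : B 0 = B j := Submodule.eq_of_le_of_finrank_le h1 (by rw [hBk, hBk])
      exact hj (hBinj h2).symm
    have := Submodule.finrank_lt_finrank_of_lt (lt_of_le_of_ne hle hne)
    rw [hBk 0] at this
    omega
  -- Piece 1: existence of the enveloping space W for each good I
  have piece1 : ∀ I : Submodule F V, I ∈ good → ∃ Wi : Submodule F V,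
      finrank F Wi = K ∧ I ≤ Wi ∧ B 0 ≤ Wi ∧
      ∀ j : Fin (s + 1), j ≠ 0 → ∀ D : Submodule F V,
        finrank F D = d → I ≤ D → D ⊓ Wi = I → finrank F ↥(D ⊓ B j) < i := by
    intro I hI
    obtain ⟨hIr, hIB0, hInot⟩ := hI
    have htj : ∀ j : Fin (s + 1), j ≠ 0 → finrank F ↥(I ⊓ B j) < i := by
      intro j hj
      have hlt : I ⊓ B j < I := lt_of_le_of_ne inf_le_left (by
        intro hEq
        exact hInot j hj (by rw [← inf_eq_left, hEq]))
      have := Submodule.finrank_lt_finrank_of_lt hlt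
      omega
    by_cases hdi : d = i
    · -- no extension needed
      obtain ⟨Wi, hW1, _, hW3⟩ := exists_intermediate_submodule (K - k) (B 0) ⊤ K le_top
        (by rw [hBk 0]; omega) (by rw [finrank_top, hV]; omega)
      refine ⟨Wi, hW3, le_trans hIB0 hW1, hW1, ?_⟩
      intro j hj D hD hID _
      have hDI : I = D := Submodule.eq_of_le_of_finrank_le hID (by omega)
      rw [← hDI]
      exact htj j hj
    · -- d > i
      have hUex : ∀ j : Fin (s + 1), j ≠ 0 → ∃ Uj : Submodule F V,
          (I ⊓ B j) ≤ Uj ∧ Uj ≤ B j ∧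
            finrank F Uj = finrank F ↥(I ⊓ B j) + (k - i + 1) := by
        intro j hj
        obtain ⟨Uj, h1, h2, h3⟩ := exists_intermediate_submodule (k - i + 1) (I ⊓ B j) (B j)
          (finrank F ↥(I ⊓ B j) + (k - i + 1)) inf_le_right rfl
          (by rw [hBk j]; have := htj j hj; omega)
        exact ⟨Uj, h1, h2, h3⟩
      choose! U hU1 hU2 hU3 using hUex
      set t := (Finset.univ.erase (0 : Fin (s + 1))) with ht_def
      have hcardt : t.card = s := by
        rw [ht_def, Finset.card_erase_of_mem (Finset.mem_univ _), Finset.card_univ,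
          Fintype.card_fin]
        omega
      have hmem_ne : ∀ j, j ∈ t → j ≠ (0 : Fin (s + 1)) :=
        fun j hj => (Finset.mem_erase.mp hj).1
      have hsup := finrank_sup_finset_le (F := F) (V := V) t (B 0) U
        (fun j => I ⊓ B j) (k - i + 1)
        (fun j _ => le_trans inf_le_left hIB0)
        (fun j hj => hU1 j (hmem_ne j hj))
        (fun j hj => le_of_eq (hU3 j (hmem_ne j hj)))
      rw [hcardt, hBk 0] at hsup
      have hW0K : finrank F ↥(B 0 ⊔ t.sup U) ≤ K := by
        have hle1 : k - i + 1 ≤ k + d - 2 * i := by omega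
        have : s * (k - i + 1) ≤ s * (k + d - 2 * i) := Nat.mul_le_mul_left s hle1
        omega
      obtain ⟨Wi, hW1, _, hW3⟩ := exists_intermediate_submodule
        (K - finrank F ↥(B 0 ⊔ t.sup U)) (B 0 ⊔ t.sup U) ⊤ K le_top (by omega)
        (by rw [finrank_top, hV]; omega)
      refine ⟨Wi, hW3, le_trans hIB0 (le_trans le_sup_left hW1),
        le_trans le_sup_left hW1, ?_⟩
      intro j hj D hD hID hDW
      have hjt : j ∈ t := Finset.mem_erase.mpr ⟨hj, Finset.mem_univ j⟩
      have hUW : U j ≤ Wi := le_trans (le_trans (Finset.le_sup hjt) le_sup_right) hW1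
      have hXY : (D ⊓ B j) ⊓ (Wi ⊓ B j) = I ⊓ B j := by
        rw [inf_inf_inf_comm, hDW, inf_idem]
      have h1 := Submodule.finrank_sup_add_finrank_inf_eq (D ⊓ B j) (Wi ⊓ B j)
      have h2 : finrank F ↥((D ⊓ B j) ⊔ (Wi ⊓ B j)) ≤ k := by
        rw [← hBk j]
        exact Submodule.finrank_mono (sup_le inf_le_right inf_le_right)
      have h3 : finrank F ↥(U j) ≤ finrank F ↥(Wi ⊓ B j) :=
        Submodule.finrank_mono (le_inf hUW (hU2 j hj))
      rw [hXY] at h1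
      have h4 := hU3 j hj
      have h5 := htj j hj
      omega
  choose! W hWrank hWle hWB0 hWprop using piece1
  -- the extension sets
  set SS : Submodule F V → Set (Submodule F V) :=
    fun I => {D | finrank F D = i + m ∧ I ≤ D ∧ D ⊓ W I = I} with hSS_def
  have hDB0 : ∀ I, I ∈ good → ∀ D ∈ SS I, D ⊓ B 0 = I := by
    intro I hI D hD
    apply le_antisymm
    · exact le_trans (inf_le_inf_left D (hWB0 I hI)) (le_of_eq hD.2.2)
    · exact le_inf hD.2.1 hI.2.1
  have hSS_sub : ∀ I, I ∈ good → SS I ⊆ T := by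
    intro I hI D hD
    have hB0 : D ⊓ B 0 = I := hDB0 I hI D hD
    refine ⟨by rw [hd_eq]; exact hD.1, by rw [hB0]; exact hI.1, ?_⟩
    intro j hj
    have := hWprop I hI j hj D (by rw [hd_eq]; exact hD.1) hD.2.1 hD.2.2
    omega
  have hSS_card : ∀ I, I ∈ good → ((SS I).ncard : ℚ)
      = (q : ℚ) ^ ((K - i) * m) * gbin (q : ℚ) (n - K) m := by
    intro I hI
    have h1 : (SS I).ncard = Nat.card
        {D : Submodule F V // finrank F D = i + m ∧ I ≤ D ∧ D ⊓ W I = I} :=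
      (Nat.card_coe_set_eq _).symm
    rw [h1]
    have h2 := card_extensions_eq_gbin (F := F) (V := V) (mm := m) (by rw [hF]; exact hq2)
      I (W I) (hWle I hI) hI.1 (hWrank I hI) (by rw [hV]; omega)
    rw [hF, hV] at h2
    exact h2
  -- count of good subspaces
  have hsubcard : ∀ (U' : Submodule F V) (c : ℕ), finrank F U' = c → i ≤ c →
      (({I : Submodule F V | finrank F I = i ∧ I ≤ U'}).ncard : ℚ) = gbin (q : ℚ) c i := by
    intro U' c hU' hic
    have h1 : ({I : Submodule F V | finrank F I = i ∧ I ≤ U'}).ncard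
        = Nat.card {I : Submodule F V // finrank F I = i ∧ I ≤ U'} :=
      (Nat.card_coe_set_eq _).symm
    rw [h1]
    have h2 := card_subspaces_eq_gbin (F := F) (V := V) (by rw [hF]; exact hq2) U' hU' hic
    rw [hF] at h2
    exact h2
  -- the bad sets
  set A : Fin (s + 1) → Set (Submodule F V) :=
    fun j => {I | finrank F I = i ∧ I ≤ B 0 ∧ I ≤ B j} with hA_def
  set allI : Set (Submodule F V) := {I | finrank F I = i ∧ I ≤ B 0} with hall_def
  -- maximizer j1
  have htne : (Finset.univ.erase (0 : Fin (s + 1))).Nonempty := by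
    rw [← Finset.card_pos, Finset.card_erase_of_mem (Finset.mem_univ _), Finset.card_univ,
      Fintype.card_fin]
    omega
  obtain ⟨j1, hj1mem, hj1max⟩ := Finset.exists_max_image (Finset.univ.erase (0 : Fin (s + 1)))
    (fun j => finrank F ↥(B 0 ⊓ B j)) htne
  have hj1ne : j1 ≠ 0 := (Finset.mem_erase.mp hj1mem).1
  set o := (Finset.univ.erase (0 : Fin (s + 1))).erase j1 with ho_def
  have hocard : o.card = s - 1 := by
    rw [ho_def, Finset.card_erase_of_mem hj1mem, Finset.card_erase_of_mem (Finset.mem_univ _),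
      Finset.card_univ, Fintype.card_fin]
    omega
  -- card of A j1
  have hAj1 : ((A j1).ncard : ℚ) ≤ gbin (q : ℚ) (k - 1) i := by
    obtain ⟨C', hC1, hC2, hC3⟩ := exists_intermediate_submodule
      (k - 1 - finrank F ↥(B 0 ⊓ B j1)) (B 0 ⊓ B j1) (B 0) (k - 1) inf_le_left
      (by have := hCj j1 hj1ne; omega) (by rw [hBk 0]; omega)
    have hsub : A j1 ⊆ {I : Submodule F V | finrank F I = i ∧ I ≤ C'} := by
      rintro I ⟨h1, h2, h3⟩
      exact ⟨h1, le_trans (le_inf h2 h3) hC1⟩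
    have := Set.ncard_le_ncard hsub (Set.toFinite _)
    have hcast : ((A j1).ncard : ℚ) ≤ (({I : Submodule F V | finrank F I = i ∧ I ≤ C'}).ncard : ℚ) := by
      exact_mod_cast this
    rw [hsubcard C' (k - 1) hC3 (by omega)] at hcast
    exact hcast
  -- per-j bound
  have hAdiff : ∀ j ∈ o, ((A j \ A j1).ncard : ℚ)
      ≤ gbin (q : ℚ) (k - 1) i - gbin (q : ℚ) (k - 2) i := by
    intro j hjo
    have hjne : j ≠ 0 := by
      have := Finset.mem_erase.mp (Finset.mem_erase.mp hjo).2
      exact this.1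
    by_cases hc : finrank F ↥(B 0 ⊓ B j) + 1 ≤ k - 1
    · -- small intersection case
      obtain ⟨C'', hC1, hC2, hC3⟩ := exists_intermediate_submodule
        (k - 2 - finrank F ↥(B 0 ⊓ B j)) (B 0 ⊓ B j) (B 0) (k - 2) inf_le_left
        (by omega) (by rw [hBk 0]; omega)
      have hsub : A j \ A j1 ⊆ {I : Submodule F V | finrank F I = i ∧ I ≤ C''} := by
        rintro I ⟨⟨h1, h2, h3⟩, _⟩
        exact ⟨h1, le_trans (le_inf h2 h3) hC1⟩
      have hle := Set.ncard_le_ncard hsub (Set.toFinite _)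
      have hcast : (((A j \ A j1)).ncard : ℚ)
          ≤ (({I : Submodule F V | finrank F I = i ∧ I ≤ C''}).ncard : ℚ) := by exact_mod_cast hle
      rw [hsubcard C'' (k - 2) hC3 (by omega)] at hcast
      have h2g := two_mul_gbin_le hqQ (c := k - 2) hi0 (by omega)
      rw [show k - 2 + 1 = k - 1 by omega] at h2g
      linarith
    · -- hyperplane case
      have hcj : finrank F ↥(B 0 ⊓ B j) = k - 1 := by have := hCj j hjne; omega
      have hcj1 : finrank F ↥(B 0 ⊓ B j1) = k - 1 := by
        have hmax := hj1max j (Finset.mem_erase.mp hjo).2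
        have := hCj j1 hj1ne
        omega
      -- dim of (B0⊓Bj) ⊓ (B0⊓Bj1) ≥ k-2
      have hinf2 : k - 2 ≤ finrank F ↥((B 0 ⊓ B j) ⊓ (B 0 ⊓ B j1)) := by
        have h1 := Submodule.finrank_sup_add_finrank_inf_eq (B 0 ⊓ B j) (B 0 ⊓ B j1)
        have h2 : finrank F ↥((B 0 ⊓ B j) ⊔ (B 0 ⊓ B j1)) ≤ k := by
          rw [← hBk 0]
          exact Submodule.finrank_mono (sup_le inf_le_left inf_le_left)
        omega
      obtain ⟨E, _, hE2, hE3⟩ := exists_intermediate_submodule (k - 2) ⊥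
        ((B 0 ⊓ B j) ⊓ (B 0 ⊓ B j1)) (k - 2) bot_le (by rw [finrank_bot]; omega) hinf2
      set SE : Set (Submodule F V) := {I | finrank F I = i ∧ I ≤ E} with hSE_def
      have hSEsub1 : SE ⊆ A j1 := by
        rintro I ⟨h1, h2⟩
        have := le_trans h2 hE2
        exact ⟨h1, le_trans this (le_trans inf_le_right inf_le_left),
          le_trans this (le_trans inf_le_right inf_le_right)⟩
      have hSEsubj : SE ⊆ A j := by
        rintro I ⟨h1, h2⟩
        have := le_trans h2 hE2
        exact ⟨h1, le_trans this (le_trans inf_le_left inf_le_left),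
          le_trans this (le_trans inf_le_left inf_le_right)⟩
      have hdisj : Disjoint (A j \ A j1) SE :=
        Set.disjoint_left.mpr (fun I hI hISE => hI.2 (hSEsub1 hISE))
      have hunion : (A j \ A j1) ∪ SE ⊆ A j := by
        rintro I (hI | hI)
        · exact hI.1
        · exact hSEsubj hI
      have hAjcard : ((A j).ncard : ℚ) ≤ gbin (q : ℚ) (k - 1) i := by
        have hsub : A j ⊆ {I : Submodule F V | finrank F I = i ∧ I ≤ B 0 ⊓ B j} := by
          rintro I ⟨h1, h2, h3⟩
          exact ⟨h1, le_inf h2 h3⟩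
        have hle := Set.ncard_le_ncard hsub (Set.toFinite _)
        have hcast : ((A j).ncard : ℚ)
            ≤ (({I : Submodule F V | finrank F I = i ∧ I ≤ B 0 ⊓ B j}).ncard : ℚ) := by
          exact_mod_cast hle
        rw [hsubcard (B 0 ⊓ B j) (k - 1) hcj (by omega)] at hcast
        exact hcast
      have hSEcard : ((SE).ncard : ℚ) = gbin (q : ℚ) (k - 2) i := hsubcard E (k - 2) hE3 (by omega)
      have hcup := Set.ncard_union_eq hdisj (Set.toFinite _) (Set.toFinite _)
      have hle2 := Set.ncard_le_ncard hunion (Set.toFinite _)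
      rw [hcup] at hle2
      have hcast2 : ((A j \ A j1).ncard : ℚ) + ((SE).ncard : ℚ) ≤ ((A j).ncard : ℚ) := by
        exact_mod_cast hle2
      rw [hSEcard] at hcast2
      linarith
  -- covering
  have hcover : allI ⊆ good ∪ A j1 ∪ ⋃ j ∈ o, (A j \ A j1) := by
    rintro I ⟨h1, h2⟩
    by_cases hg : ∀ j : Fin (s + 1), j ≠ 0 → ¬ I ≤ B j
    · exact Or.inl (Or.inl ⟨h1, h2, hg⟩)
    · push_neg at hg
      obtain ⟨j, hjne, hjle⟩ := hg
      by_cases hj1 : I ∈ A j1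
      · exact Or.inl (Or.inr hj1)
      · refine Or.inr ?_
        rw [Set.mem_iUnion]
        refine ⟨j, ?_⟩
        rw [Set.mem_iUnion]
        have hjo : j ∈ o := by
          rw [ho_def, Finset.mem_erase, Finset.mem_erase]
          refine ⟨?_, hjne, Finset.mem_univ j⟩
          rintro rfl
          exact hj1 ⟨h1, h2, hjle⟩
        exact ⟨hjo, ⟨h1, h2, hjle⟩, fun hc => hj1 hc⟩
  -- count allI
  have hallcard : ((allI).ncard : ℚ) = gbin (q : ℚ) k i := hsubcard (B 0) k (hBk 0) (by omega)
  -- good lower bound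
  have hgoodlb : ((good).ncard : ℚ) ≥ gbin (q : ℚ) k i - gbin (q : ℚ) (k - 1) i
      - ((s : ℚ) - 1) * (gbin (q : ℚ) (k - 1) i - gbin (q : ℚ) (k - 2) i) := by
    have h1 := Set.ncard_le_ncard hcover (Set.toFinite _)
    have h2 := Set.ncard_union_le (good ∪ A j1) (⋃ j ∈ o, (A j \ A j1))
    have h3 := Set.ncard_union_le good (A j1)
    have h4 := ncard_biUnion_le' o (fun j => A j \ A j1)
    have hnat : allI.ncard ≤ good.ncard + (A j1).ncard + ∑ j ∈ o, (A j \ A j1).ncard := by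
      omega
    have hcast : ((allI).ncard : ℚ) ≤ ((good).ncard : ℚ) + ((A j1).ncard : ℚ)
        + ∑ j ∈ o, (((A j \ A j1)).ncard : ℚ) := by
      exact_mod_cast hnat
    have hsumle : ∑ j ∈ o, (((A j \ A j1)).ncard : ℚ)
        ≤ ((s : ℚ) - 1) * (gbin (q : ℚ) (k - 1) i - gbin (q : ℚ) (k - 2) i) := by
      have := Finset.sum_le_card_nsmul o (fun j => (((A j \ A j1)).ncard : ℚ))
        (gbin (q : ℚ) (k - 1) i - gbin (q : ℚ) (k - 2) i) (fun j hj => hAdiff j hj)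
      rw [hocard] at this
      rw [nsmul_eq_mul] at this
      have hcast2 : ((s - 1 : ℕ) : ℚ) = (s : ℚ) - 1 := by
        have : (1:ℕ) ≤ s := hs1
        push_cast [Nat.cast_sub this]
        ring
      rw [hcast2] at this
      exact this
    rw [hallcard] at hcast
    linarith
  -- Pascal identities
  have hp1 : gbin (q : ℚ) k i
      = gbin (q : ℚ) (k - 1) i + (q : ℚ) ^ (k - i) * gbin (q : ℚ) (k - 1) (i - 1) := by
    have h := gbin_pascal hqQ (a := k - 1) (b := i - 1) (by omega)
    rw [show k - 1 + 1 = k by omega, show i - 1 + 1 = i by omega,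
      show k - 1 - (i - 1) = k - i by omega] at h
    exact h
  have hp2 : gbin (q : ℚ) (k - 1) i
      = gbin (q : ℚ) (k - 2) i + (q : ℚ) ^ (k - i - 1) * gbin (q : ℚ) (k - 2) (i - 1) := by
    have h := gbin_pascal hqQ (a := k - 2) (b := i - 1) (by omega)
    rw [show k - 2 + 1 = k - 1 by omega, show i - 1 + 1 = i by omega,
      show k - 2 - (i - 1) = k - i - 1 by omega] at h
    exact h
  -- sum over good
  set goodF := (Set.toFinite good).toFinset with hgoodF_def
  have hmemF : ∀ I, I ∈ goodF ↔ I ∈ good := fun I => Set.Finite.mem_toFinset _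
  have hgoodFcard : goodF.card = good.ncard := by
    rw [hgoodF_def, ← Set.ncard_eq_toFinset_card good (Set.toFinite good)]
  have hdisjF : ∀ I ∈ goodF, ∀ I' ∈ goodF, I ≠ I' → Disjoint (SS I) (SS I') := by
    intro I hI I' hI' hne
    rw [Set.disjoint_left]
    intro D hD hD'
    exact hne (((hDB0 I ((hmemF I).mp hI) D hD).symm).trans
      (hDB0 I' ((hmemF I').mp hI') D hD'))
  have hsumT : ∑ I ∈ goodF, (SS I).ncard ≤ T.ncard := by
    rw [← ncard_biUnion_eq' goodF SS hdisjF]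
    apply Set.ncard_le_ncard _ (Set.toFinite T)
    intro D hD
    rw [Set.mem_iUnion] at hD
    obtain ⟨I, hI⟩ := hD
    rw [Set.mem_iUnion] at hI
    obtain ⟨hIF, hDSS⟩ := hI
    exact hSS_sub I ((hmemF I).mp hIF) hDSS
  have hcastT : ((T.ncard : ℕ) : ℚ)
      ≥ (good.ncard : ℚ) * ((q : ℚ) ^ ((K - i) * m) * gbin (q : ℚ) (n - K) m) := by
    have h1 : ((∑ I ∈ goodF, (SS I).ncard : ℕ) : ℚ) ≤ ((T.ncard : ℕ) : ℚ) := by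
      exact_mod_cast hsumT
    rw [Nat.cast_sum] at h1
    have h2 : ∑ I ∈ goodF, (((SS I).ncard : ℕ) : ℚ)
        = (goodF.card : ℚ) * ((q : ℚ) ^ ((K - i) * m) * gbin (q : ℚ) (n - K) m) := by
      rw [Finset.sum_congr rfl (fun I hI => hSS_card I ((hmemF I).mp hI)),
        Finset.sum_const, nsmul_eq_mul]
    rw [h2, hgoodFcard] at h1
    exact h1
  have hEq_nonneg : 0 ≤ (q : ℚ) ^ ((K - i) * m) * gbin (q : ℚ) (n - K) m :=
    mul_nonneg (pow_nonneg (by linarith) _) (gbin_nonneg hqQ _ _)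
  have hFq : gbin (q : ℚ) k i - gbin (q : ℚ) (k - 1) i
      - ((s : ℚ) - 1) * (gbin (q : ℚ) (k - 1) i - gbin (q : ℚ) (k - 2) i)
      = (q : ℚ) ^ (k - i) * gbin (q : ℚ) (k - 1) (i - 1)
          - ((s : ℚ) - 1) * (q : ℚ) ^ (k - i - 1) * gbin (q : ℚ) (k - 2) (i - 1) := by
    rw [hp1, hp2]
    ring
  have hFqle : (q : ℚ) ^ (k - i) * gbin (q : ℚ) (k - 1) (i - 1)
      - ((s : ℚ) - 1) * (q : ℚ) ^ (k - i - 1) * gbin (q : ℚ) (k - 2) (i - 1)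
      ≤ (good.ncard : ℚ) := by
    rw [← hFq]
    linarith
  rw [show m * (K - i) = (K - i) * m from Nat.mul_comm _ _]
  have hstep := mul_le_mul_of_nonneg_right hFqle hEq_nonneg
  nlinarith [hcastT, hstep]
end
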